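/- Consider horizon T ≥ 1 and the COLDQ setup: 𝒳 ⊆ ℝ^p convex with ‖x − y‖ ≤ R for all x, y ∈ 𝒳 (R > 0); convex loss functions f_t : 𝒳 → ℝ admitting subgradient maps ∇f_t with ‖∇f_t(x)‖ ≤ D and f_t(y) ≥ f_t(x) + ⟨∇f_t(x), y − x⟩ for all x, y ∈ 𝒳; convex constraint functions g_t^n : 𝒳 → ℝ (1 ≤ n ≤ N) with |g_t^n(x)| ≤ G on 𝒳; a nondecreasing sequence α_t > 0; parameters η ∈ (0,1), γ ∈ (0, G/η); x_1 ∈ 𝒳 arbitrary, Q_1^n = γ, and for t ∈ {2,…,T}: x_t minimizes over 𝒳 the function Φ_t(x) = ⟨∇f_{t−1}(x_{t−1}), x − x_{t−1}⟩ + α_{t−1}·‖x − x_{t−1}‖² + Σ_{n=1}^N Q_{t−1}^n·[g_{t−1}^n(x)]_+ and Q_t^n = max{(1−η)·Q_{t−1}^n + [g_t^n(x_t)]_+ , γ}. Let x_t* ∈ 𝒳 satisfy g_t^n(x_t*) ≤ 0 for all t, n, and let B_t ≥ 0 (2 ≤ t ≤ T) satisfy (Σ_{n=1}^N (g_t^n(x)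 − g_{t−1}^n(x))²)^{1/2} ≤ B_t for all x ∈ 𝒳. Then the hard constraint violation satisfies Σ_{n=1}^N Σ_{t=1}^T [g_t^n(x_t)]_+ ≤ (G·√N/(η·γ))·Σ_{t=2}^T B_t + (2R/γ)·Σ_{t=2}^T α_{t−1}·‖x_t* − x_{t−1}*‖ + (D²/(4γ))·Σ_{t=1}^T (1/α_t) + (D·R + 2·N·G²)·T/γ + R²·α_T/γ + N·G. -/

import Mathlib

open scoped RealInnerProductSpace

private lemma aux_nonneg {A K : ℝ} (hK : 0 ≤ K)
    (h : ∀ s : ℝ, 0 < s → s ≤ 1 → 0 ≤ A + s * K) : 0 ≤ A := by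
  by_contra hA
  push_neg at hA
  have hden : (0:ℝ) < 2 * K + 1 := by linarith
  have hs0 : (0:ℝ) < min 1 (-A / (2 * K + 1)) :=
    lt_min one_pos (div_pos (by linarith) hden)
  have h2 := h _ hs0 (min_le_left _ _)
  have h3 : min 1 (-A / (2 * K + 1)) * K ≤ (-A / (2 * K + 1)) * K :=
    mul_le_mul_of_nonneg_right (min_le_right _ _) hK
  have h4 : (-A / (2 * K + 1)) * K < -A := by
    rw [div_mul_eq_mul_div, div_lt_iff₀ hden]
    nlinarith
  linarith

private lemma strong_min {E : Type*} [NormedAddCommGroup E] [InnerProductSpace ℝ E]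
    {𝒳 : Set E} (hX : Convex ℝ 𝒳) {φ : E → ℝ} (hφ : ConvexOn ℝ 𝒳 φ)
    {α : ℝ} (hα : 0 < α) (c : E) {x₀ : E} (hx₀ : x₀ ∈ 𝒳)
    (hmin : ∀ y ∈ 𝒳, φ x₀ + α * ‖x₀ - c‖ ^ 2 ≤ φ y + α * ‖y - c‖ ^ 2)
    {y : E} (hy : y ∈ 𝒳) :
    φ x₀ + α * ‖x₀ - c‖ ^ 2 + α * ‖y - x₀‖ ^ 2 ≤ φ y + α * ‖y - c‖ ^ 2 := by
  have key : 0 ≤ (φ y - φ x₀) + 2 * α * ⟪x₀ - c, y - x₀⟫ := by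
    apply aux_nonneg (K := α * ‖y - x₀‖ ^ 2) (by positivity)
    intro s hs0 hs1
    have hz : (1 - s) • x₀ + s • y ∈ 𝒳 := hX hx₀ hy (by linarith) (le_of_lt hs0) (by ring)
    have h1 := hmin _ hz
    have h2 := hφ.2 hx₀ hy (by linarith : (0:ℝ) ≤ 1 - s) (le_of_lt hs0) (by ring)
    have h3 : (1 - s) • x₀ + s • y - c = (x₀ - c) + s • (y - x₀) := by
      rw [sub_smul, smul_sub, one_smul]
      abel
    have h4 : ‖(1 - s) • x₀ + s • y - c‖ ^ 2
        = ‖x₀ - c‖ ^ 2 + 2 * (s * ⟪x₀ - c, y - x₀⟫) + s ^ 2 * ‖y - x₀‖ ^ 2 := by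
      rw [h3, norm_add_sq_real, real_inner_smul_right, norm_smul]
      simp [abs_of_pos hs0, mul_pow]
    rw [h4] at h1
    simp only [smul_eq_mul] at h2
    have h5 : 0 ≤ s * (((φ y - φ x₀) + 2 * α * ⟪x₀ - c, y - x₀⟫) + s * (α * ‖y - x₀‖ ^ 2)) := by
      nlinarith [h1, h2]
    have := (mul_nonneg_iff_of_pos_left hs0).mp h5
    linarith
  have hexp : ‖y - c‖ ^ 2 = ‖x₀ - c‖ ^ 2 + 2 * ⟪x₀ - c, y - x₀⟫ + ‖y - x₀‖ ^ 2 := by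
    have h : y - c = (x₀ - c) + (y - x₀) := by abel
    rw [h, norm_add_sq_real]
  nlinarith

private lemma shift_Icc (h : ℕ → ℝ) : ∀ T : ℕ,
    ∑ t ∈ Finset.Icc 2 (T + 1), h (t - 1) = ∑ t ∈ Finset.Icc 1 T, h t := by
  intro T
  induction T with
  | zero => simp
  | succ n ih =>
      rw [Finset.sum_Icc_succ_top (a := 2) (b := n + 1) (by omega),
        Finset.sum_Icc_succ_top (a := 1) (b := n) (by omega), ih]
      norm_num

private lemma telescope_Icc (F : ℕ → ℝ) : ∀ T : ℕ, 1 ≤ T →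
    ∑ t ∈ Finset.Icc 2 T, (F (t - 1) - F t) = F 1 - F T := by
  intro T
  induction T with
  | zero => omega
  | succ n ih =>
      intro _
      rcases Nat.eq_or_lt_of_le (show 1 ≤ n + 1 by omega) with h | h
      · have hn : n = 0 := by omega
        subst hn
        simp
      · have hn : 1 ≤ n := by omega
        rw [Finset.sum_Icc_succ_top (a := 2) (b := n) (by omega), ih hn]
        simp only [Nat.add_sub_cancel]
        ring

set_option maxHeartbeats 1600000 in
/-- Hard constraint violation bound of COLDQ (Theorem 2). -/
theorem coldq_hard_violation
    (p N T : ℕ) (hT : 1 ≤ T) (R D G η γ : ℝ)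
    (hR : 0 < R)
    (𝒳 : Set (EuclideanSpace ℝ (Fin p)))
    (hXconv : Convex ℝ 𝒳)
    (hXbdd : ∀ x ∈ 𝒳, ∀ y ∈ 𝒳, ‖x - y‖ ≤ R)
    (f : ℕ → EuclideanSpace ℝ (Fin p) → ℝ)
    (hfconv : ∀ t, ConvexOn ℝ 𝒳 (f t))
    (gradf : ℕ → EuclideanSpace ℝ (Fin p) → EuclideanSpace ℝ (Fin p))
    (hgradD : ∀ t, ∀ x ∈ 𝒳, ‖gradf t x‖ ≤ D)
    (hsub : ∀ t, ∀ x ∈ 𝒳, ∀ y ∈ 𝒳, f t x + ⟪gradf t x, y - x⟫ ≤ f t y)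
    (g : ℕ → Fin N → EuclideanSpace ℝ (Fin p) → ℝ)
    (hgconv : ∀ t n, ConvexOn ℝ 𝒳 (g t n))
    (hgG : ∀ t n, ∀ x ∈ 𝒳, |g t n x| ≤ G)
    (α : ℕ → ℝ) (hαpos : ∀ t, 0 < α t) (hαmono : Monotone α)
    (hη0 : 0 < η) (hη1 : η < 1) (hγ0 : 0 < γ) (hγG : γ < G / η)
    (x : ℕ → EuclideanSpace ℝ (Fin p)) (hx1 : x 1 ∈ 𝒳)
    (Q : ℕ → Fin N → ℝ) (hQ1 : ∀ n, Q 1 n = γ)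
    (hxX : ∀ t, 2 ≤ t → t ≤ T → x t ∈ 𝒳)
    (hxmin : ∀ t, 2 ≤ t → t ≤ T → ∀ y ∈ 𝒳,
      ⟪gradf (t - 1) (x (t - 1)), x t - x (t - 1)⟫
          + α (t - 1) * ‖x t - x (t - 1)‖ ^ 2
          + ∑ n, Q (t - 1) n * max (g (t - 1) n (x t)) 0 ≤
        ⟪gradf (t - 1) (x (t - 1)), y - x (t - 1)⟫
          + α (t - 1) * ‖y - x (t - 1)‖ ^ 2
          + ∑ n, Q (t - 1) n * max (g (t - 1) n y) 0)
    (hQupd : ∀ t, 2 ≤ t → t ≤ T → ∀ n,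
      Q t n = max ((1 - η) * Q (t - 1) n + max (g t n (x t)) 0) γ)
    (xstar : ℕ → EuclideanSpace ℝ (Fin p))
    (hxstarX : ∀ t, 1 ≤ t → t ≤ T → xstar t ∈ 𝒳)
    (hxstarfeas : ∀ t, 1 ≤ t → t ≤ T → ∀ n, g t n (xstar t) ≤ 0)
    (B : ℕ → ℝ) (hB0 : ∀ t, 2 ≤ t → t ≤ T → 0 ≤ B t)
    (hB : ∀ t, 2 ≤ t → t ≤ T → ∀ x ∈ 𝒳,
      Real.sqrt (∑ n, (g t n x - g (t - 1) n x) ^ 2) ≤ B t) :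
    ∑ n : Fin N, ∑ t ∈ Finset.Icc 1 T, max (g t n (x t)) 0 ≤
      (G * Real.sqrt N / (η * γ)) * ∑ t ∈ Finset.Icc 2 T, B t
        + (2 * R / γ) * ∑ t ∈ Finset.Icc 2 T, α (t - 1) * ‖xstar t - xstar (t - 1)‖
        + (D ^ 2 / (4 * γ)) * ∑ t ∈ Finset.Icc 1 T, (1 / α t)
        + (D * R + 2 * N * G ^ 2) * T / γ
        + R ^ 2 * α T / γ + N * G := by
  have hD0 : 0 ≤ D := le_trans (norm_nonneg _) (hgradD 0 (x 1) hx1)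
  have hηγG : η * γ < G := by
    rw [lt_div_iff₀ hη0] at hγG; linarith
  have hG0 : 0 < G := lt_of_le_of_lt (by positivity) hηγG
  -- the per-step key inequality
  have key : ∀ t, 2 ≤ t → t ≤ T →
      γ * (∑ n, max (g t n (x t)) 0) ≤
        D * R + D ^ 2 / (4 * α (t - 1))
          + (α (t - 1) * ‖xstar (t - 1) - x (t - 1)‖ ^ 2 - α t * ‖xstar t - x t‖ ^ 2)
          + (α t - α (t - 1)) * R ^ 2
          + 2 * R * (α (t - 1) * ‖xstar t - xstar (t - 1)‖)
          + γ * (Real.sqrt N * B t) := by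
    intro t ht2 htT
    have hs1 : 1 ≤ t - 1 := by omega
    have hsT : t - 1 ≤ T := by omega
    have hxs : x (t - 1) ∈ 𝒳 := by
      rcases eq_or_lt_of_le hs1 with h | h
      · rw [← h]; exact hx1
      · exact hxX (t - 1) (by omega) hsT
    have hxt : x t ∈ 𝒳 := hxX t ht2 htT
    have hQγ : ∀ n, γ ≤ Q (t - 1) n := by
      intro n
      rcases eq_or_lt_of_le hs1 with h | h
      · rw [← h, hQ1]
      · rw [hQupd (t - 1) (by omega) hsT n]; exact le_max_right _ _
    have hxstars : xstar (t - 1) ∈ 𝒳 := hxstarX (t - 1) hs1 hsT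
    have hxstart : xstar t ∈ 𝒳 := hxstarX t (by omega) htT
    set v := gradf (t - 1) (x (t - 1)) with hv
    set c := x (t - 1) with hc
    set φ : EuclideanSpace ℝ (Fin p) → ℝ :=
      fun y => ⟪v, y - c⟫ + ∑ n, Q (t - 1) n * max (g (t - 1) n y) 0 with hφdef
    have hφconv : ConvexOn ℝ 𝒳 φ := by
      apply ConvexOn.add
      · refine ⟨hXconv, fun a ha b hb μ ν hμ hν hμν => le_of_eq ?_⟩
        simp only [inner_sub_right, inner_add_right, real_inner_smul_right, smul_eq_mul]
        linear_combination (⟪v, c⟫ : ℝ) * hμν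
      · have hterm : ∀ n : Fin N,
            ConvexOn ℝ 𝒳 (fun y => Q (t - 1) n * max (g (t - 1) n y) 0) := by
          intro n
          have h1 : ConvexOn ℝ 𝒳 ((g (t - 1) n) ⊔ (fun _ => (0:ℝ))) :=
            (hgconv (t - 1) n).sup (convexOn_const 0 hXconv)
          have h2 := h1.smul (c := Q (t - 1) n) (le_trans hγ0.le (hQγ n))
          simpa [Pi.sup_def, smul_eq_mul] using h2
        classical
        have hind : ∀ sfin : Finset (Fin N),
            ConvexOn ℝ 𝒳 (fun y => ∑ n ∈ sfin, Q (t - 1) n * max (g (t - 1) n y) 0) := by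
          intro sfin
          induction sfin using Finset.induction with
          | empty => simpa using convexOn_const (0:ℝ) hXconv
          | @insert i si hi ih =>
              have := (hterm i).add ih
              simp only [Finset.sum_insert hi]
              exact this
        exact hind Finset.univ
    have hminφ : ∀ y ∈ 𝒳, φ (x t) + α (t - 1) * ‖x t - c‖ ^ 2 ≤ φ y + α (t - 1) * ‖y - c‖ ^ 2 := by
      intro y hy
      have := hxmin t ht2 htT y hy
      simp only [hφdef]
      linarith
    have hstrong := strong_min hXconv hφconv (hαpos (t - 1)) c hxt hminφ hxstars
    -- evaluate φ at the feasible point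
    have hfeas : φ (xstar (t - 1)) = ⟪v, xstar (t - 1) - c⟫ := by
      simp only [hφdef]
      have hz : ∀ n : Fin N, Q (t - 1) n * max (g (t - 1) n (xstar (t - 1))) 0 = 0 := by
        intro n
        rw [max_eq_right (hxstarfeas (t - 1) hs1 hsT n), mul_zero]
      rw [Finset.sum_eq_zero (fun n _ => hz n), add_zero]
    -- lower bound φ (x t)
    have hφlow : ⟪v, x t - c⟫ + γ * ∑ n, max (g t n (x t) - (g t n (x t) - g (t - 1) n (x t))) 0
        ≤ φ (x t) := by
      simp only [hφdef, sub_sub_cancel]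
      have : γ * ∑ n, max (g (t - 1) n (x t)) 0
          ≤ ∑ n, Q (t - 1) n * max (g (t - 1) n (x t)) 0 := by
        rw [Finset.mul_sum]
        exact Finset.sum_le_sum fun n _ =>
          mul_le_mul_of_nonneg_right (hQγ n) (le_max_right _ _)
      linarith
    have hφlow' : ⟪v, x t - c⟫ + γ * ∑ n, max (g (t - 1) n (x t)) 0 ≤ φ (x t) := by
      simpa using hφlow
    -- shift g_{t-1} to g_t using B_t
    have hshift : ∑ n, max (g t n (x t)) 0
        ≤ (∑ n, max (g (t - 1) n (x t)) 0) + Real.sqrt N * B t := by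
      have h1 : ∀ n : Fin N, max (g t n (x t)) 0
          ≤ max (g (t - 1) n (x t)) 0 + |g t n (x t) - g (t - 1) n (x t)| := by
        intro n
        apply max_le
        · have h := le_abs_self (g t n (x t) - g (t - 1) n (x t))
          have h' := le_max_left (g (t - 1) n (x t)) 0
          linarith
        · positivity
      have h2 : ∑ n, max (g t n (x t)) 0
          ≤ (∑ n, max (g (t - 1) n (x t)) 0) + ∑ n, |g t n (x t) - g (t - 1) n (x t)| := by
        rw [← Finset.sum_add_distrib]
        exact Finset.sum_le_sum fun n _ => h1 n
      have hcs : (∑ n, |g t n (x t) - g (t - 1) n (x t)|) ^ 2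
          ≤ (N : ℝ) * ∑ n, (g t n (x t) - g (t - 1) n (x t)) ^ 2 := by
        have := sq_sum_le_card_mul_sum_sq (s := (Finset.univ : Finset (Fin N)))
          (f := fun n => |g t n (x t) - g (t - 1) n (x t)|)
        simpa [sq_abs] using this
      have h0 : 0 ≤ ∑ n, |g t n (x t) - g (t - 1) n (x t)| :=
        Finset.sum_nonneg fun n _ => abs_nonneg _
      have h3 : ∑ n, |g t n (x t) - g (t - 1) n (x t)| ≤ Real.sqrt N * B t := by
        calc ∑ n, |g t n (x t) - g (t - 1) n (x t)|
            = Real.sqrt ((∑ n, |g t n (x t) - g (t - 1) n (x t)|) ^ 2) :=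
              (Real.sqrt_sq h0).symm
          _ ≤ Real.sqrt ((N : ℝ) * ∑ n, (g t n (x t) - g (t - 1) n (x t)) ^ 2) :=
              Real.sqrt_le_sqrt hcs
          _ = Real.sqrt N * Real.sqrt (∑ n, (g t n (x t) - g (t - 1) n (x t)) ^ 2) :=
              Real.sqrt_mul (Nat.cast_nonneg N) _
          _ ≤ Real.sqrt N * B t :=
              mul_le_mul_of_nonneg_left (hB t ht2 htT (x t) hxt) (Real.sqrt_nonneg _)
      linarith
    -- bound the inner products
    have hDR : ⟪v, xstar (t - 1) - c⟫ ≤ D * R :=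
      le_trans (real_inner_le_norm v _)
        (mul_le_mul (hgradD (t - 1) (x (t - 1)) hxs) (hXbdd _ hxstars _ hxs)
          (norm_nonneg _) hD0)
    have hI2 : -⟪v, x t - c⟫ ≤ D * ‖x t - c‖ := by
      have h1 : |⟪v, x t - c⟫| ≤ ‖v‖ * ‖x t - c‖ := abs_real_inner_le_norm v _
      have h2 : ‖v‖ * ‖x t - c‖ ≤ D * ‖x t - c‖ :=
        mul_le_mul_of_nonneg_right (hgradD (t - 1) (x (t - 1)) hxs) (norm_nonneg _)
      have := neg_abs_le ⟪v, x t - c⟫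
      linarith
    have hsq : D * ‖x t - c‖ - α (t - 1) * ‖x t - c‖ ^ 2 ≤ D ^ 2 / (4 * α (t - 1)) := by
      rw [le_div_iff₀ (by have := hαpos (t - 1); positivity)]
      nlinarith [sq_nonneg (D - 2 * α (t - 1) * ‖x t - c‖), hαpos (t - 1)]
    -- norm comparison
    have htri : ‖xstar t - x t‖ ≤ ‖xstar t - xstar (t - 1)‖ + ‖xstar (t - 1) - x t‖ :=
      norm_sub_le_norm_sub_add_norm_sub _ _ _
    have hRa : ‖xstar t - x t‖ ≤ R := hXbdd _ hxstart _ hxt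
    have hRb : ‖xstar (t - 1) - x t‖ ≤ R := hXbdd _ hxstars _ hxt
    have hRd : ‖xstar t - xstar (t - 1)‖ ≤ R := hXbdd _ hxstart _ hxstars
    have hαst : α (t - 1) ≤ α t := hαmono (by omega)
    have hsqcmp : α t * ‖xstar t - x t‖ ^ 2 - α (t - 1) * ‖xstar (t - 1) - x t‖ ^ 2
        ≤ (α t - α (t - 1)) * R ^ 2 + 2 * R * (α (t - 1) * ‖xstar t - xstar (t - 1)‖) := by
      have h1 : ‖xstar t - x t‖ ^ 2
          ≤ ‖xstar (t - 1) - x t‖ ^ 2 + 2 * R * ‖xstar t - xstar (t - 1)‖ := by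
        have htri' : ‖xstar t - x t‖ - ‖xstar (t - 1) - x t‖ ≤ ‖xstar t - xstar (t - 1)‖ := by
          linarith [htri]
        rcases le_or_gt ‖xstar t - x t‖ ‖xstar (t - 1) - x t‖ with h | h
        · have hpos : 0 ≤ 2 * R * ‖xstar t - xstar (t - 1)‖ := by positivity
          nlinarith [norm_nonneg (xstar t - x t), norm_nonneg (xstar (t - 1) - x t)]
        · have hmul : (‖xstar t - x t‖ - ‖xstar (t - 1) - x t‖)
              * (‖xstar t - x t‖ + ‖xstar (t - 1) - x t‖)
              ≤ ‖xstar t - xstar (t - 1)‖ * (2 * R) := by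
            apply mul_le_mul htri' (by linarith) _ (norm_nonneg _)
            positivity
          nlinarith [hmul]
      have e1 : 0 ≤ (α t - α (t - 1)) * (R ^ 2 - ‖xstar t - x t‖ ^ 2) :=
        mul_nonneg (by linarith) (by nlinarith [norm_nonneg (xstar t - x t)])
      have e2 : 0 ≤ α (t - 1) * (‖xstar (t - 1) - x t‖ ^ 2
          + 2 * R * ‖xstar t - xstar (t - 1)‖ - ‖xstar t - x t‖ ^ 2) :=
        mul_nonneg (hαpos _).le (by linarith)
      nlinarith
    -- assemble
    have hmain : γ * ∑ n, max (g (t - 1) n (x t)) 0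
        ≤ D * R + D ^ 2 / (4 * α (t - 1))
          + α (t - 1) * (‖xstar (t - 1) - c‖ ^ 2 - ‖xstar (t - 1) - x t‖ ^ 2) := by
      have h1 : ⟪v, x t - c⟫ + γ * ∑ n, max (g (t - 1) n (x t)) 0
            + α (t - 1) * ‖x t - c‖ ^ 2 + α (t - 1) * ‖xstar (t - 1) - x t‖ ^ 2
          ≤ ⟪v, xstar (t - 1) - c⟫ + α (t - 1) * ‖xstar (t - 1) - c‖ ^ 2 := by
        rw [← hfeas]
        linarith [hstrong, hφlow']
      have h2 : -⟪v, x t - c⟫ - α (t - 1) * ‖x t - c‖ ^ 2 ≤ D ^ 2 / (4 * α (t - 1)) := by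
        linarith [hI2, hsq]
      linarith
    have hc' : c = x (t - 1) := hc
    have hfinal : γ * ∑ n, max (g t n (x t)) 0
        ≤ γ * ∑ n, max (g (t - 1) n (x t)) 0 + γ * (Real.sqrt N * B t) := by
      have := mul_le_mul_of_nonneg_left hshift hγ0.le
      linarith [this]
    have hexpand : α (t - 1) * (‖xstar (t - 1) - c‖ ^ 2 - ‖xstar (t - 1) - x t‖ ^ 2)
        ≤ (α (t - 1) * ‖xstar (t - 1) - x (t - 1)‖ ^ 2 - α t * ‖xstar t - x t‖ ^ 2)
          + (α t - α (t - 1)) * R ^ 2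
          + 2 * R * (α (t - 1) * ‖xstar t - xstar (t - 1)‖) := by
      rw [hc']
      linarith [hsqcmp]
    linarith
  -- now sum things up
  classical
  set S1 := ∑ t ∈ Finset.Icc 2 T, B t with hS1def
  set S2 := ∑ t ∈ Finset.Icc 2 T, α (t - 1) * ‖xstar t - xstar (t - 1)‖ with hS2def
  set S3 := ∑ t ∈ Finset.Icc 1 T, (1 / α t) with hS3def
  have hS1nn : 0 ≤ S1 := Finset.sum_nonneg fun t ht => by
    rw [Finset.mem_Icc] at ht; exact hB0 t ht.1 ht.2
  have hS2nn : 0 ≤ S2 := Finset.sum_nonneg fun t ht =>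
    mul_nonneg (hαpos _).le (norm_nonneg _)
  -- sum of the key inequality
  have hsum1 : ∑ t ∈ Finset.Icc 2 T, (γ * ∑ n, max (g t n (x t)) 0)
      ≤ ∑ t ∈ Finset.Icc 2 T, (D * R + D ^ 2 / (4 * α (t - 1))
          + (α (t - 1) * ‖xstar (t - 1) - x (t - 1)‖ ^ 2 - α t * ‖xstar t - x t‖ ^ 2)
          + (α t - α (t - 1)) * R ^ 2
          + 2 * R * (α (t - 1) * ‖xstar t - xstar (t - 1)‖)
          + γ * (Real.sqrt N * B t)) := by
    apply Finset.sum_le_sum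
    intro t ht
    rw [Finset.mem_Icc] at ht
    exact key t ht.1 ht.2
  -- evaluate/bound the pieces of the RHS sum
  have hpiece1 : ∑ t ∈ Finset.Icc 2 T, (D * R) ≤ (T : ℝ) * (D * R) := by
    rw [Finset.sum_const, Nat.card_Icc, nsmul_eq_mul]
    apply mul_le_mul_of_nonneg_right _ (by positivity)
    exact_mod_cast Nat.cast_le.mpr (by omega : T + 1 - 2 ≤ T)
  have hpiece2 : ∑ t ∈ Finset.Icc 2 T, (D ^ 2 / (4 * α (t - 1))) ≤ D ^ 2 / 4 * S3 := by
    have hT' : T = (T - 1) + 1 := by omega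
    have hshift' : ∑ t ∈ Finset.Icc 2 T, (D ^ 2 / (4 * α (t - 1)))
        = ∑ t ∈ Finset.Icc 1 (T - 1), (D ^ 2 / (4 * α t)) := by
      rw [hT']
      exact shift_Icc (fun t => D ^ 2 / (4 * α t)) (T - 1)
    rw [hshift']
    have hsub : ∑ t ∈ Finset.Icc 1 (T - 1), (D ^ 2 / (4 * α t))
        ≤ ∑ t ∈ Finset.Icc 1 T, (D ^ 2 / (4 * α t)) := by
      apply Finset.sum_le_sum_of_subset_of_nonneg
      · exact Finset.Icc_subset_Icc_right (by omega)
      · intro i _ _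
        have := hαpos i
        positivity
    have heq : ∑ t ∈ Finset.Icc 1 T, (D ^ 2 / (4 * α t)) = D ^ 2 / 4 * S3 := by
      rw [hS3def, Finset.mul_sum]
      apply Finset.sum_congr rfl
      intro i _
      have := (hαpos i).ne'
      field_simp
    linarith
  have hpiece3 : ∑ t ∈ Finset.Icc 2 T,
      (α (t - 1) * ‖xstar (t - 1) - x (t - 1)‖ ^ 2 - α t * ‖xstar t - x t‖ ^ 2)
      ≤ α 1 * R ^ 2 := by
    rw [telescope_Icc (fun t => α t * ‖xstar t - x t‖ ^ 2) T hT]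
    have h1 : ‖xstar 1 - x 1‖ ≤ R := hXbdd _ (hxstarX 1 le_rfl hT) _ hx1
    have h2 : α 1 * ‖xstar 1 - x 1‖ ^ 2 ≤ α 1 * R ^ 2 :=
      mul_le_mul_of_nonneg_left (by nlinarith [norm_nonneg (xstar 1 - x 1)]) (hαpos 1).le
    have h3 : 0 ≤ α T * ‖xstar T - x T‖ ^ 2 := mul_nonneg (hαpos T).le (by positivity)
    linarith
  have hpiece4 : ∑ t ∈ Finset.Icc 2 T, ((α t - α (t - 1)) * R ^ 2)
      = (α T - α 1) * R ^ 2 := by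
    have h := telescope_Icc α T hT
    have h2 : ∑ t ∈ Finset.Icc 2 T, ((α t - α (t - 1)) * R ^ 2)
        = (∑ t ∈ Finset.Icc 2 T, (α (t - 1) - α t)) * (-(R ^ 2)) := by
      rw [Finset.sum_mul]
      apply Finset.sum_congr rfl
      intro i _
      ring
    rw [h2, h]
    ring
  have hpiece5 : ∑ t ∈ Finset.Icc 2 T, (2 * R * (α (t - 1) * ‖xstar t - xstar (t - 1)‖))
      = 2 * R * S2 := by
    rw [hS2def, Finset.mul_sum]
  have hpiece6 : ∑ t ∈ Finset.Icc 2 T, (γ * (Real.sqrt N * B t))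
      = γ * (Real.sqrt N * S1) := by
    rw [hS1def, Finset.mul_sum, Finset.mul_sum]
  have hsumRHS : ∑ t ∈ Finset.Icc 2 T, (D * R + D ^ 2 / (4 * α (t - 1))
          + (α (t - 1) * ‖xstar (t - 1) - x (t - 1)‖ ^ 2 - α t * ‖xstar t - x t‖ ^ 2)
          + (α t - α (t - 1)) * R ^ 2
          + 2 * R * (α (t - 1) * ‖xstar t - xstar (t - 1)‖)
          + γ * (Real.sqrt N * B t))
      ≤ (T : ℝ) * (D * R) + D ^ 2 / 4 * S3 + α T * R ^ 2 + 2 * R * S2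
        + γ * (Real.sqrt N * S1) := by
    simp only [Finset.sum_add_distrib]
    rw [hpiece4, hpiece5, hpiece6]
    have : α 1 * R ^ 2 + (α T - α 1) * R ^ 2 = α T * R ^ 2 := by ring
    linarith [hpiece1, hpiece2, hpiece3]
  -- split off t = 1
  have hIcc : Finset.Icc 1 T = insert 1 (Finset.Icc 2 T) := by
    ext a
    simp only [Finset.mem_Icc, Finset.mem_insert]
    omega
  have hnotmem : (1 : ℕ) ∉ Finset.Icc 2 T := by simp
  have hLHSsplit : ∑ n : Fin N, ∑ t ∈ Finset.Icc 1 T, max (g t n (x t)) 0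
      = (∑ n : Fin N, max (g 1 n (x 1)) 0)
        + ∑ t ∈ Finset.Icc 2 T, ∑ n : Fin N, max (g t n (x t)) 0 := by
    rw [Finset.sum_comm, hIcc, Finset.sum_insert hnotmem]
  have ht1 : ∑ n : Fin N, max (g 1 n (x 1)) 0 ≤ (N : ℝ) * G := by
    have h := Finset.sum_le_sum (s := (Finset.univ : Finset (Fin N)))
      (f := fun n => max (g 1 n (x 1)) 0) (g := fun _ => G)
      (fun n _ => max_le (abs_le.1 (hgG 1 n (x 1) hx1)).2 hG0.le)
    simpa [Finset.sum_const, Finset.card_univ, nsmul_eq_mul] using h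
  -- finish by multiplying through by γ
  apply le_of_mul_le_mul_left _ hγ0
  rw [hLHSsplit]
  have hγsum : γ * ∑ t ∈ Finset.Icc 2 T, ∑ n : Fin N, max (g t n (x t)) 0
      = ∑ t ∈ Finset.Icc 2 T, (γ * ∑ n, max (g t n (x t)) 0) := by
    rw [Finset.mul_sum]
  have hmain2 : γ * ∑ t ∈ Finset.Icc 2 T, ∑ n : Fin N, max (g t n (x t)) 0
      ≤ (T : ℝ) * (D * R) + D ^ 2 / 4 * S3 + α T * R ^ 2 + 2 * R * S2
        + γ * (Real.sqrt N * S1) := by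
    rw [hγsum]
    linarith [hsum1, hsumRHS]
  have hB1 : γ * (Real.sqrt N * S1) ≤ G / η * (Real.sqrt N * S1) :=
    mul_le_mul_of_nonneg_right hγG.le (by positivity)
  have hRHSexp : γ * ((G * Real.sqrt N / (η * γ)) * S1
        + (2 * R / γ) * S2
        + (D ^ 2 / (4 * γ)) * S3
        + (D * R + 2 * N * G ^ 2) * T / γ
        + R ^ 2 * α T / γ + N * G)
      = G / η * (Real.sqrt N * S1) + 2 * R * S2 + D ^ 2 / 4 * S3
        + (D * R + 2 * N * G ^ 2) * T + R ^ 2 * α T + γ * (N * G) := by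
    field_simp
  rw [hRHSexp]
  have hT0 : (0 : ℝ) ≤ T := Nat.cast_nonneg T
  have hNG : (0 : ℝ) ≤ 2 * N * G ^ 2 * T := by positivity
  have hexp2 : (D * R + 2 * N * G ^ 2) * T = D * R * T + 2 * N * G ^ 2 * T := by ring
  have ht1' : γ * ((∑ n : Fin N, max (g 1 n (x 1)) 0)
        + ∑ t ∈ Finset.Icc 2 T, ∑ n : Fin N, max (g t n (x t)) 0)
      = γ * (∑ n : Fin N, max (g 1 n (x 1)) 0)
        + γ * ∑ t ∈ Finset.Icc 2 T, ∑ n : Fin N, max (g t n (x t)) 0 := by ring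
  rw [ht1']
  have hγt1 : γ * (∑ n : Fin N, max (g 1 n (x 1)) 0) ≤ γ * ((N : ℝ) * G) :=
    mul_le_mul_of_nonneg_left ht1 hγ0.le
  nlinarith [hmain2, hB1, hγt1]
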